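/- If φ₁ ∧ ... ∧ φₙ ⊨ ψ where the φᵢ have pairwise disjoint signatures, then there exist formulas χ₁, ..., χₙ such that φᵢ ⊨ χᵢ for each i, sig(χᵢ) ⊆ sig(φᵢ) ∩ sig(ψ) for each i, and χ₁ ∧ ... ∧ χₙ ⊨ ψ. -/

import Mathlib

inductive PropForm : Type where
  | var : ℕ → PropForm
  | tru : PropForm
  | fls : PropForm
  | neg : PropForm → PropForm
  | conj : PropForm → PropForm → PropForm
  | disj : PropForm → PropForm → PropForm
deriving DecidableEq

namespace PropForm

def eval (v : ℕ → Bool) : PropForm → Bool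
  | var p => v p
  | tru => true
  | fls => false
  | neg φ => !(eval v φ)
  | conj φ ψ => eval v φ && eval v ψ
  | disj φ ψ => eval v φ || eval v ψ

def sig : PropForm → Finset ℕ
  | var p => {p}
  | tru => ∅
  | fls => ∅
  | neg φ => sig φ
  | conj φ ψ => sig φ ∪ sig ψ
  | disj φ ψ => sig φ ∪ sig ψ

def impl (φ ψ : PropForm) : PropForm := disj (neg φ) ψ

def iff (φ ψ : PropForm) : PropForm := conj (impl φ ψ) (impl ψ φ)

end PropForm

/-- Semantic entailment: every model of `φ` is a model of `ψ`. -/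
def Entails (φ ψ : PropForm) : Prop :=
  ∀ v : ℕ → Bool, φ.eval v = true → ψ.eval v = true

/-- Conjunction of a list of formulas. -/
def bigConj (l : List PropForm) : PropForm := l.foldr PropForm.conj PropForm.tru

/- ===== auxiliary development ===== -/

theorem eval_eq_of_agree (φ : PropForm) {v w : ℕ → Bool}
    (h : ∀ x ∈ φ.sig, v x = w x) : φ.eval v = φ.eval w := by
  induction φ with
  | var p => exact h p (by simp [PropForm.sig])
  | tru => rfl
  | fls => rfl
  | neg φ ih => simp [PropForm.eval, ih h]
  | conj φ ψ ih1 ih2 =>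
      simp only [PropForm.sig, Finset.mem_union] at h
      simp [PropForm.eval, ih1 (fun x hx => h x (Or.inl hx)),
        ih2 (fun x hx => h x (Or.inr hx))]
  | disj φ ψ ih1 ih2 =>
      simp only [PropForm.sig, Finset.mem_union] at h
      simp [PropForm.eval, ih1 (fun x hx => h x (Or.inl hx)),
        ih2 (fun x hx => h x (Or.inr hx))]

theorem eval_bigConj (v : ℕ → Bool) (l : List PropForm) :
    (bigConj l).eval v = true ↔ ∀ φ ∈ l, φ.eval v = true := by
  induction l with
  | nil => simp [bigConj, PropForm.eval]
  | cons a l ih => simp_all [bigConj, PropForm.eval]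

theorem mem_sig_bigConj {l : List PropForm} {x : ℕ}
    (hx : x ∈ (bigConj l).sig) : ∃ φ ∈ l, x ∈ φ.sig := by
  induction l with
  | nil => simp [bigConj, PropForm.sig] at hx
  | cons a l ih =>
      simp only [bigConj, List.foldr, PropForm.sig, Finset.mem_union] at hx
      rcases hx with hx | hx
      · exact ⟨a, by simp, hx⟩
      · obtain ⟨φ, hφ, hxφ⟩ := ih hx
        exact ⟨φ, by simp [hφ], hxφ⟩

def bigDisj (l : List PropForm) : PropForm := l.foldr PropForm.disj PropForm.fls

theorem eval_bigDisj (v : ℕ → Bool) (l : List PropForm) :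
    (bigDisj l).eval v = true ↔ ∃ φ ∈ l, φ.eval v = true := by
  induction l with
  | nil => simp [bigDisj, PropForm.eval]
  | cons a l ih => simp_all [bigDisj, PropForm.eval]

theorem mem_sig_bigDisj {l : List PropForm} {x : ℕ}
    (hx : x ∈ (bigDisj l).sig) : ∃ φ ∈ l, x ∈ φ.sig := by
  induction l with
  | nil => simp [bigDisj, PropForm.sig] at hx
  | cons a l ih =>
      simp only [bigDisj, List.foldr, PropForm.sig, Finset.mem_union] at hx
      rcases hx with hx | hx
      · exact ⟨a, by simp, hx⟩
      · obtain ⟨φ, hφ, hxφ⟩ := ih hx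
        exact ⟨φ, by simp [hφ], hxφ⟩

/-- Literal clause describing that the variables in `S` take the values
given by membership in `T`. -/
noncomputable def clause (S T : Finset ℕ) : PropForm :=
  bigConj (S.toList.map fun x =>
    if x ∈ T then PropForm.var x else PropForm.neg (PropForm.var x))

theorem sig_clause (S T : Finset ℕ) : (clause S T).sig ⊆ S := by
  intro x hx
  obtain ⟨φ, hφ, hxφ⟩ := mem_sig_bigConj hx
  simp only [List.mem_map, Finset.mem_toList] at hφ
  obtain ⟨y, hy, rfl⟩ := hφ
  by_cases hyt : y ∈ T <;> simp_all [PropForm.sig]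

theorem eval_clause (S T : Finset ℕ) (v : ℕ → Bool) :
    (clause S T).eval v = true ↔ ∀ x ∈ S, v x = decide (x ∈ T) := by
  rw [clause, eval_bigConj]
  constructor
  · intro hAll x hx
    have := hAll _ (List.mem_map.2 ⟨x, Finset.mem_toList.2 hx, rfl⟩)
    by_cases hxt : x ∈ T <;> simp_all [PropForm.eval]
  · intro hv φ hφ
    simp only [List.mem_map, Finset.mem_toList] at hφ
    obtain ⟨y, hy, rfl⟩ := hφ
    have := hv y hy
    by_cases hyt : y ∈ T <;> simp_all [PropForm.eval]

open Classical in
/-- A formula over variables `S` realizing the boolean function `f`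
(assuming `f` only depends on the variables in `S`). -/
noncomputable def realize (S : Finset ℕ) (f : (ℕ → Bool) → Bool) : PropForm :=
  bigDisj ((S.powerset.toList.filter fun T => f (fun x => decide (x ∈ T))).map (clause S))

theorem sig_realize (S : Finset ℕ) (f : (ℕ → Bool) → Bool) : (realize S f).sig ⊆ S := by
  intro x hx
  obtain ⟨φ, hφ, hxφ⟩ := mem_sig_bigDisj hx
  simp only [List.mem_map, List.mem_filter] at hφ
  obtain ⟨T, _, rfl⟩ := hφ
  exact sig_clause S T hxφ

theorem eval_realize (S : Finset ℕ) (f : (ℕ → Bool) → Bool)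
    (hdep : ∀ v w : ℕ → Bool, (∀ x ∈ S, v x = w x) → f v = f w) (v : ℕ → Bool) :
    (realize S f).eval v = true ↔ f v = true := by
  rw [realize, eval_bigDisj]
  constructor
  · rintro ⟨φ, hφ, hev⟩
    simp only [List.mem_map, List.mem_filter, Finset.mem_toList, Finset.mem_powerset] at hφ
    obtain ⟨T, ⟨hT, hfT⟩, rfl⟩ := hφ
    rw [eval_clause] at hev
    rw [hdep v (fun x => decide (x ∈ T)) hev]
    exact hfT
  · intro hfv
    refine ⟨clause S (S.filter fun x => v x = true), ?_, ?_⟩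
    · simp only [List.mem_map, List.mem_filter, Finset.mem_toList, Finset.mem_powerset]
      refine ⟨_, ⟨Finset.filter_subset _ _, ?_⟩, rfl⟩
      rw [hdep _ v ?_]
      · exact hfv
      · intro x hx
        simp [Finset.mem_filter, hx]
    · rw [eval_clause]
      intro x hx
      simp [Finset.mem_filter, hx]

/-- Parallel interpolation: for formulas with pairwise disjoint signatures whose
conjunction entails `ψ`, there are parallel interpolants. -/
theorem parallel_interpolation (n : ℕ) (φs : Fin n → PropForm) (ψ : PropForm)
    (hdisj : ∀ i j : Fin n, i ≠ j → (φs i).sig ∩ (φs j).sig = ∅)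
    (h : Entails (bigConj (List.ofFn φs)) ψ) :
    ∃ χs : Fin n → PropForm,
      (∀ i, Entails (φs i) (χs i)) ∧
      (∀ i, (χs i).sig ⊆ (φs i).sig ∩ ψ.sig) ∧
      Entails (bigConj (List.ofFn χs)) ψ := by
  classical
  set S : Fin n → Finset ℕ := fun i => (φs i).sig ∩ ψ.sig with hS
  set f : Fin n → (ℕ → Bool) → Bool := fun i v =>
    decide (∃ w : ℕ → Bool, (∀ x ∈ S i, w x = v x) ∧ (φs i).eval w = true) with hf
  have hdep : ∀ i, ∀ v w : ℕ → Bool, (∀ x ∈ S i, v x = w x) → f i v = f i w := by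
    intro i v w hvw
    simp only [hf, decide_eq_decide]
    constructor
    · rintro ⟨u, hu, huφ⟩
      exact ⟨u, fun x hx => (hu x hx).trans (hvw x hx), huφ⟩
    · rintro ⟨u, hu, huφ⟩
      exact ⟨u, fun x hx => (hu x hx).trans (hvw x hx).symm, huφ⟩
  refine ⟨fun i => realize (S i) (f i), ?_, fun i => sig_realize _ _, ?_⟩
  · intro i v hv
    rw [eval_realize _ _ (hdep i)]
    simp only [hf, decide_eq_true_eq]
    exact ⟨v, fun x _ => rfl, hv⟩
  · intro v hv
    rw [eval_bigConj] at hv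
    have hvi : ∀ i, ∃ w : ℕ → Bool, (∀ x ∈ S i, w x = v x) ∧ (φs i).eval w = true := by
      intro i
      have := hv _ (List.mem_ofFn.2 ⟨i, rfl⟩)
      rw [eval_realize _ _ (hdep i)] at this
      simpa [hf] using this
    choose ws hws hwφ using hvi
    -- combined valuation
    set w : ℕ → Bool := fun x =>
      if hx : ∃ i : Fin n, x ∈ (φs i).sig ∧ x ∉ ψ.sig then ws hx.choose x else v x with hw
    have hwψ : ∀ x ∈ ψ.sig, w x = v x := by
      intro x hx
      rw [hw]
      simp only
      rw [dif_neg]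
      rintro ⟨i, _, hxψ⟩
      exact hxψ hx
    have hwφi : ∀ i, (φs i).eval w = true := by
      intro i
      rw [eval_eq_of_agree (φs i) (w := ws i)]
      · exact hwφ i
      · intro x hx
        by_cases hxψ : x ∈ ψ.sig
        · rw [hwψ x hxψ, ← hws i x (Finset.mem_inter.2 ⟨hx, hxψ⟩)]
        · have hex : ∃ j : Fin n, x ∈ (φs j).sig ∧ x ∉ ψ.sig := ⟨i, hx, hxψ⟩
          have hji : hex.choose = i := by
            by_contra hne
            have := hdisj _ _ hne
            have hxmem : x ∈ (φs hex.choose).sig ∩ (φs i).sig :=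
              Finset.mem_inter.2 ⟨hex.choose_spec.1, hx⟩
            simp [this] at hxmem
          rw [hw]
          simp only
          rw [dif_pos hex, hji]
    have : (bigConj (List.ofFn φs)).eval w = true := by
      rw [eval_bigConj]
      intro φ hφ
      obtain ⟨i, rfl⟩ := List.mem_ofFn.1 hφ
      exact hwφi i
    have hψw := h w this
    rw [eval_eq_of_agree ψ (w := w)]
    · exact hψw
    · intro x hx
      exact (hwψ x hx).symm
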